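/- Let s ≥ 3 and s+2 ≤ t ≤ 2s-1 be integers. Suppose Q is a colour scheme for K_t with parameter s such that v(Q') ≤ v(Q) for every colour scheme Q' for K_t with parameter s. Let P be a node of Q such that every block containing P has size strictly less than t/2. Then the local value satisfies v(P) < 2δ/t. -/

import Mathlib

/-- The pair `(s,t)` is regular if `s ≥ 11` and `s+3 ≤ t ≤ 2s-4`, or if
`(s,t) ∈ {(10,14),(10,15)}`. -/
def IsRegularPair (s t : ℕ) : Prop :=
  (11 ≤ s ∧ s + 3 ≤ t ∧ t ≤ 2 * s - 4) ∨ (s = 10 ∧ t = 14) ∨ (s = 10 ∧ t = 15)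

open Classical in
/-- The exponent `α = α_{s,t}`. -/
noncomputable def ERalpha (s t : ℕ) : ℝ :=
  if IsRegularPair s t then
    (((s : ℝ) - 2) * ((t : ℝ) - (s : ℝ)) * ((t : ℝ) + (s : ℝ) - 1) + 2 * (t : ℝ) - 2 * (s : ℝ)) /
      ((2 * (s : ℝ) - 3) * ((t : ℝ) - (s : ℝ)) * ((t : ℝ) + (s : ℝ) - 1) - 2 * (s : ℝ) + 4)
  else
    (((s : ℝ) - 2) * ((t : ℝ) - (s : ℝ)) * ((s : ℝ) - 1) + (s : ℝ) - 1) /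
      ((2 * (s : ℝ) - 3) * ((t : ℝ) - (s : ℝ)) * ((s : ℝ) - 1) + 2 * (s : ℝ) - (t : ℝ))

/-- `δ = s - (2s-1)α`. -/
noncomputable def ERdelta (s t : ℕ) : ℝ := (s : ℝ) - (2 * (s : ℝ) - 1) * ERalpha s t

/-- `η = 2(1-α) - δ`. -/
noncomputable def EReta (s t : ℕ) : ℝ := 2 * (1 - ERalpha s t) - ERdelta s t

/-- A colour scheme for `K_t` with parameter `s`: a set of `t` nodes together with a
family of blocks (colours), each of size at least `2` and at most `s`, such that every
pair of distinct nodes is contained in exactly one block. -/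
structure ColourScheme (s t : ℕ) where
  blocks : Finset (Finset (Fin t))
  two_le_card : ∀ D ∈ blocks, 2 ≤ D.card
  card_le_s : ∀ D ∈ blocks, D.card ≤ s
  existsUnique_block : ∀ x y : Fin t, x ≠ y → ∃! D, D ∈ blocks ∧ x ∈ D ∧ y ∈ D

/-- The value `v(Q) = t - 2 + (b-1)δ + (l-2)(α-1)` of a scheme, where `b` is the number
of blocks and `l` the number of labels. -/
noncomputable def schemeValue {s t : ℕ} (Q : ColourScheme s t) : ℝ :=
  (t : ℝ) - 2 + ((Q.blocks.card : ℝ) - 1) * ERdelta s t +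
    ((∑ D ∈ Q.blocks, (D.card : ℝ)) - 2) * (ERalpha s t - 1)

/-- The local value `v(P) = 1 + Σ_{D : P ∈ D} (δ/|D| + (α-1))` at a node `P` of a
scheme, where the sum is over all blocks containing `P`. -/
noncomputable def localValue {s t : ℕ} (Q : ColourScheme s t) (P : Fin t) : ℝ :=
  1 + ∑ D ∈ Q.blocks.filter (fun D => P ∈ D), (ERdelta s t / (D.card : ℝ) + (ERalpha s t - 1))

/-- Auxiliary quadratic `F(d) = d(d-1)(2δ-t) + d t(t-1)(1-α) - δ t(t-1)`. -/
private noncomputable def Fq (s t : ℕ) (d : ℝ) : ℝ :=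
  d * (d - 1) * (2 * ERdelta s t - (t : ℝ)) + d * (t : ℝ) * ((t : ℝ) - 1) * (1 - ERalpha s t) -
    ERdelta s t * (t : ℝ) * ((t : ℝ) - 1)

private lemma pos_of_mul_eq {x p a : ℝ} (hp : 0 < p) (ha : 0 < a) (h : x * p = a) : 0 < x := by
  by_contra hx
  push_neg at hx
  nlinarith

set_option maxHeartbeats 1600000 in
private lemma Fq_key (s t : ℕ) (hs : 3 ≤ s) (ht1 : s + 2 ≤ t) (ht2 : t ≤ 2 * s - 1) :
    0 < Fq s t 2 ∧ 0 < Fq s t (((t : ℝ) - 1) / 2) ∧ 2 * ERdelta s t < (t : ℝ) := by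
  by_cases hreg : IsRegularPair s t
  · -- regular case: use u = t - s - 3 ≥ 0, v = 2s - 4 - t ≥ 0
    have h1 : s + 3 ≤ t := by
      rcases hreg with ⟨h, h', h''⟩ | ⟨rfl, rfl⟩ | ⟨rfl, rfl⟩ <;> omega
    have h2 : t + 4 ≤ 2 * s := by
      rcases hreg with ⟨h, h', h''⟩ | ⟨rfl, rfl⟩ | ⟨rfl, rfl⟩ <;> omega
    have hu : (0:ℝ) ≤ (t:ℝ) - (s:ℝ) - 3 := by
      have : ((s + 3 : ℕ) : ℝ) ≤ ((t : ℕ) : ℝ) := Nat.cast_le.mpr h1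
      push_cast at this; linarith
    have hv : (0:ℝ) ≤ 2 * (s:ℝ) - 4 - (t:ℝ) := by
      have : ((t + 4 : ℕ) : ℝ) ≤ ((2 * s : ℕ) : ℝ) := Nat.cast_le.mpr h2
      push_cast at this; linarith
    have hm : ∀ i j : ℕ, (0:ℝ) ≤ ((t:ℝ) - (s:ℝ) - 3) ^ i * (2 * (s:ℝ) - 4 - (t:ℝ)) ^ j :=
      fun i j => mul_nonneg (pow_nonneg hu i) (pow_nonneg hv j)
    have ha : ERalpha s t =
        (((s : ℝ) - 2) * ((t : ℝ) - (s : ℝ)) * ((t : ℝ) + (s : ℝ) - 1) + 2 * (t : ℝ) - 2 * (s : ℝ)) /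
          ((2 * (s : ℝ) - 3) * ((t : ℝ) - (s : ℝ)) * ((t : ℝ) + (s : ℝ) - 1) - 2 * (s : ℝ) + 4) := by
      rw [ERalpha, if_pos hreg]
    have hden : (0:ℝ) <
        (2 * (s : ℝ) - 3) * ((t : ℝ) - (s : ℝ)) * ((t : ℝ) + (s : ℝ) - 1) - 2 * (s : ℝ) + 4 := by
      nlinarith [hm 0 1, hm 0 2, hm 1 0, hm 1 1, hm 1 2, hm 2 0, hm 2 1, hm 3 0]
    have hApos : (0:ℝ) < (-2) * (s:ℝ)^2 * (t:ℝ)^2 + 4 * (s:ℝ)^3 * (t:ℝ) + 6 * (s:ℝ) * (t:ℝ)^2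
        - 8 * (s:ℝ)^2 * (t:ℝ) - 8 * (s:ℝ)^3 - 12 * (s:ℝ) * (t:ℝ) + 24 * (s:ℝ)^2 := by
      nlinarith [hm 0 1, hm 0 2, hm 0 3, hm 0 4, hm 1 0, hm 1 1, hm 1 2, hm 1 3, hm 2 0,
        hm 2 1, hm 2 2, hm 3 0, hm 3 1]
    have hBpos : (0:ℝ) < (t:ℝ)^5 - (s:ℝ)^2 * (t:ℝ)^3 - 9 * (t:ℝ)^4 - (s:ℝ) * (t:ℝ)^3
        + 12 * (s:ℝ)^3 * (t:ℝ) + 27 * (t:ℝ)^3 + 24 * (s:ℝ) * (t:ℝ)^2 - 35 * (s:ℝ)^2 * (t:ℝ)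
        - 12 * (s:ℝ)^3 - 39 * (t:ℝ)^2 - 23 * (s:ℝ) * (t:ℝ) + 36 * (s:ℝ)^2 + 20 * (t:ℝ) := by
      nlinarith [hm 0 1, hm 0 2, hm 0 3, hm 0 4, hm 1 0, hm 1 1, hm 1 2, hm 1 3, hm 1 4,
        hm 2 0, hm 2 1, hm 2 2, hm 2 3, hm 3 0, hm 3 1, hm 3 2, hm 4 0, hm 4 1, hm 5 0]
    have hCpos : (0:ℝ) < 2 * (s:ℝ) * (t:ℝ)^3 - 2 * (s:ℝ)^3 * (t:ℝ) - 3 * (t:ℝ)^3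
        - 6 * (s:ℝ) * (t:ℝ)^2 + 5 * (s:ℝ)^2 * (t:ℝ) + 4 * (s:ℝ)^3 + 7 * (t:ℝ)^2
        + 7 * (s:ℝ) * (t:ℝ) - 12 * (s:ℝ)^2 - 4 * (t:ℝ) := by
      nlinarith [hm 0 1, hm 0 2, hm 0 3, hm 1 0, hm 1 1, hm 1 2, hm 1 3, hm 2 0, hm 2 1,
        hm 2 2, hm 3 0, hm 3 1, hm 4 0]
    refine ⟨?_, ?_, ?_⟩
    · refine pos_of_mul_eq hden hApos ?_
      simp only [Fq, ERdelta]
      have hα := (congrArg (· * _) ha).trans (div_mul_cancel₀ _ hden.ne')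
      linear_combination (-(2*(s:ℝ)-1)*4 - 2*(t:ℝ)*((t:ℝ)-1) + (2*(s:ℝ)-1)*(t:ℝ)*((t:ℝ)-1)) * hα
    · refine pos_of_mul_eq (by linarith : (0:ℝ) < 4 * ((2 * (s : ℝ) - 3) * ((t : ℝ) - (s : ℝ)) *
        ((t : ℝ) + (s : ℝ) - 1) - 2 * (s : ℝ) + 4)) hBpos ?_
      simp only [Fq, ERdelta]
      have hα := (congrArg (· * _) ha).trans (div_mul_cancel₀ _ hden.ne')
      linear_combination (4*(-(2*(s:ℝ)-1)*((t:ℝ)-1)*((t:ℝ)-3)/2 - ((t:ℝ)-1)*(t:ℝ)*((t:ℝ)-1)/2 + (2*(s:ℝ)-1)*(t:ℝ)*((t:ℝ)-1))) * hα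
    · have hkey : ((t:ℝ) - 2 * ERdelta s t) *
          ((2 * (s : ℝ) - 3) * ((t : ℝ) - (s : ℝ)) * ((t : ℝ) + (s : ℝ) - 1) - 2 * (s : ℝ) + 4) =
          2 * (s:ℝ) * (t:ℝ)^3 - 2 * (s:ℝ)^3 * (t:ℝ) - 3 * (t:ℝ)^3 - 6 * (s:ℝ) * (t:ℝ)^2
            + 5 * (s:ℝ)^2 * (t:ℝ) + 4 * (s:ℝ)^3 + 7 * (t:ℝ)^2 + 7 * (s:ℝ) * (t:ℝ)
            - 12 * (s:ℝ)^2 - 4 * (t:ℝ) := by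
        simp only [ERdelta]
        have hα := (congrArg (· * _) ha).trans (div_mul_cancel₀ _ hden.ne')
        linear_combination (2*(2*(s:ℝ)-1)) * hα
      have := pos_of_mul_eq hden hCpos hkey
      linarith
  · -- exceptional case: use u = t - s - 2 ≥ 0, v = 2s - 1 - t ≥ 0
    have h2 : t + 1 ≤ 2 * s := by omega
    have hu : (0:ℝ) ≤ (t:ℝ) - (s:ℝ) - 2 := by
      have : ((s + 2 : ℕ) : ℝ) ≤ ((t : ℕ) : ℝ) := Nat.cast_le.mpr ht1
      push_cast at this; linarith
    have hv : (0:ℝ) ≤ 2 * (s:ℝ) - 1 - (t:ℝ) := by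
      have : ((t + 1 : ℕ) : ℝ) ≤ ((2 * s : ℕ) : ℝ) := Nat.cast_le.mpr h2
      push_cast at this; linarith
    have hm : ∀ i j : ℕ, (0:ℝ) ≤ ((t:ℝ) - (s:ℝ) - 2) ^ i * (2 * (s:ℝ) - 1 - (t:ℝ)) ^ j :=
      fun i j => mul_nonneg (pow_nonneg hu i) (pow_nonneg hv j)
    have ha : ERalpha s t =
        (((s : ℝ) - 2) * ((t : ℝ) - (s : ℝ)) * ((s : ℝ) - 1) + (s : ℝ) - 1) /
          ((2 * (s : ℝ) - 3) * ((t : ℝ) - (s : ℝ)) * ((s : ℝ) - 1) + 2 * (s : ℝ) - (t : ℝ)) := by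
      rw [ERalpha, if_neg hreg]
    have hden : (0:ℝ) <
        (2 * (s : ℝ) - 3) * ((t : ℝ) - (s : ℝ)) * ((s : ℝ) - 1) + 2 * (s : ℝ) - (t : ℝ) := by
      nlinarith [hm 0 1, hm 0 2, hm 1 0, hm 1 1, hm 1 2, hm 2 0, hm 2 1, hm 3 0]
    have hApos : (0:ℝ) < (s:ℝ) * (t:ℝ)^3 - 4 * (s:ℝ)^2 * (t:ℝ)^2 + 4 * (s:ℝ)^3 * (t:ℝ)
        - 2 * (t:ℝ)^3 + 8 * (s:ℝ) * (t:ℝ)^2 - 2 * (s:ℝ)^2 * (t:ℝ) - 8 * (s:ℝ)^3 + (t:ℝ)^2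
        - 17 * (s:ℝ) * (t:ℝ) + 16 * (s:ℝ)^2 + 5 * (t:ℝ) + 4 * (s:ℝ) - 4 := by
      nlinarith [hm 0 1, hm 0 2, hm 0 3, hm 0 4, hm 1 0, hm 1 1, hm 1 2, hm 1 3, hm 2 0,
        hm 2 1, hm 2 2, hm 3 0]
    have hBpos : (0:ℝ) < (s:ℝ) * (t:ℝ)^4 - (s:ℝ)^2 * (t:ℝ)^3 - 2 * (t:ℝ)^4 - (s:ℝ) * (t:ℝ)^3
        - 8 * (s:ℝ)^2 * (t:ℝ)^2 + 12 * (s:ℝ)^3 * (t:ℝ) + 6 * (t:ℝ)^3 + 25 * (s:ℝ) * (t:ℝ)^2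
        - 15 * (s:ℝ)^2 * (t:ℝ) - 12 * (s:ℝ)^3 - 16 * (t:ℝ)^2 - 31 * (s:ℝ) * (t:ℝ)
        + 24 * (s:ℝ)^2 + 18 * (t:ℝ) + 6 * (s:ℝ) - 6 := by
      nlinarith [hm 0 1, hm 0 2, hm 0 3, hm 0 4, hm 1 0, hm 1 1, hm 1 2, hm 1 3, hm 1 4,
        hm 2 0, hm 2 1, hm 2 2, hm 2 3, hm 3 0, hm 3 1, hm 3 2, hm 4 0, hm 4 1, hm 5 0]
    have hCpos : (0:ℝ) < 2 * (s:ℝ)^2 * (t:ℝ)^2 - 2 * (s:ℝ)^3 * (t:ℝ) - 5 * (s:ℝ) * (t:ℝ)^2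
        + (s:ℝ)^2 * (t:ℝ) + 4 * (s:ℝ)^3 + 2 * (t:ℝ)^2 + 9 * (s:ℝ) * (t:ℝ) - 8 * (s:ℝ)^2
        - 4 * (t:ℝ) - 2 * (s:ℝ) + 2 := by
      nlinarith [hm 0 1, hm 0 2, hm 0 3, hm 1 0, hm 1 1, hm 1 2, hm 1 3, hm 2 0, hm 2 1,
        hm 2 2, hm 3 0, hm 3 1, hm 4 0]
    refine ⟨?_, ?_, ?_⟩
    · refine pos_of_mul_eq hden hApos ?_
      simp only [Fq, ERdelta]
      have hα := (congrArg (· * _) ha).trans (div_mul_cancel₀ _ hden.ne')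
      linear_combination (-(2*(s:ℝ)-1)*4 - 2*(t:ℝ)*((t:ℝ)-1) + (2*(s:ℝ)-1)*(t:ℝ)*((t:ℝ)-1)) * hα
    · refine pos_of_mul_eq (by linarith : (0:ℝ) < 4 * ((2 * (s : ℝ) - 3) * ((t : ℝ) - (s : ℝ)) *
        ((s : ℝ) - 1) + 2 * (s : ℝ) - (t : ℝ))) hBpos ?_
      simp only [Fq, ERdelta]
      have hα := (congrArg (· * _) ha).trans (div_mul_cancel₀ _ hden.ne')
      linear_combination (4*(-(2*(s:ℝ)-1)*((t:ℝ)-1)*((t:ℝ)-3)/2 - ((t:ℝ)-1)*(t:ℝ)*((t:ℝ)-1)/2 + (2*(s:ℝ)-1)*(t:ℝ)*((t:ℝ)-1))) * hα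
    · have hkey : ((t:ℝ) - 2 * ERdelta s t) *
          ((2 * (s : ℝ) - 3) * ((t : ℝ) - (s : ℝ)) * ((s : ℝ) - 1) + 2 * (s : ℝ) - (t : ℝ)) =
          2 * (s:ℝ)^2 * (t:ℝ)^2 - 2 * (s:ℝ)^3 * (t:ℝ) - 5 * (s:ℝ) * (t:ℝ)^2 + (s:ℝ)^2 * (t:ℝ)
            + 4 * (s:ℝ)^3 + 2 * (t:ℝ)^2 + 9 * (s:ℝ) * (t:ℝ) - 8 * (s:ℝ)^2 - 4 * (t:ℝ)
            - 2 * (s:ℝ) + 2 := by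
        simp only [ERdelta]
        have hα := (congrArg (· * _) ha).trans (div_mul_cancel₀ _ hden.ne')
        linear_combination (2*(2*(s:ℝ)-1)) * hα
      have := pos_of_mul_eq hden hCpos hkey
      linarith

private lemma Fq_pos_mid (s t : ℕ) (d e : ℝ) (h2d : 2 ≤ d) (hde : d ≤ e)
    (hA : 0 < Fq s t 2) (hB : 0 < Fq s t e) (hC : 2 * ERdelta s t < (t : ℝ)) :
    0 < Fq s t d := by
  have hid : (e - 2) * Fq s t d =
      (d - 2) * Fq s t e + (e - d) * Fq s t 2 +
        ((t : ℝ) - 2 * ERdelta s t) * ((d - 2) * ((e - d) * (e - 2))) := by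
    simp only [Fq]; ring
  rcases eq_or_lt_of_le (le_trans h2d hde) with he2 | he2
  · have hd2 : d = 2 := le_antisymm (hde.trans he2.symm.le) h2d
    rw [hd2]; exact hA
  · rcases eq_or_lt_of_le hde with hde' | hde'
    · rw [hde']; exact hB
    · have h1 : 0 < (e - d) * Fq s t 2 := mul_pos (by linarith) hA
      have h2 : 0 ≤ (d - 2) * Fq s t e := mul_nonneg (by linarith) hB.le
      have h3 : 0 ≤ ((t:ℝ) - 2 * ERdelta s t) * ((d - 2) * ((e - d) * (e - 2))) :=
        mul_nonneg (by linarith)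
          (mul_nonneg (by linarith) (mul_nonneg (by linarith) (by linarith)))
      have h4 : 0 < (e - 2) * Fq s t d := by rw [hid]; linarith
      by_contra hcon
      push_neg at hcon
      nlinarith

set_option maxHeartbeats 1600000 in
/-- **Lemma (localneg).** Let `Q` be a colour scheme for `K_t` with parameter `s` of
maximal value, and let `P` be a node all of whose blocks have size less than `t/2`.
Then the local value satisfies `v(P) < 2δ/t`. -/
theorem localValue_lt (s t : ℕ) (hs : 3 ≤ s) (ht1 : s + 2 ≤ t) (ht2 : t ≤ 2 * s - 1)
    (Q : ColourScheme s t)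
    (hmax : ∀ Q' : ColourScheme s t, schemeValue Q' ≤ schemeValue Q)
    (P : Fin t) (hP : ∀ D ∈ Q.blocks, P ∈ D → (D.card : ℝ) < (t : ℝ) / 2) :
    localValue Q P < 2 * ERdelta s t / (t : ℝ) := by
  classical
  obtain ⟨hA, hB, hC⟩ := Fq_key s t hs ht1 ht2
  have ht5 : 5 ≤ t := by omega
  have hT5 : (5:ℝ) ≤ (t:ℝ) := by exact_mod_cast ht5
  have hT0 : (0:ℝ) < (t:ℝ) := by linarith
  have hT1 : (0:ℝ) < (t:ℝ) - 1 := by linarith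
  -- the blocks through P
  have hdisj : ∀ D₁ ∈ Q.blocks.filter (fun D => P ∈ D), ∀ D₂ ∈ Q.blocks.filter (fun D => P ∈ D),
      D₁ ≠ D₂ → Disjoint (D₁.erase P) (D₂.erase P) := by
    intro D₁ h1 D₂ h2 hne12
    rw [Finset.mem_filter] at h1 h2
    rw [Finset.disjoint_left]
    intro y hy1 hy2
    have hyP : y ≠ P := Finset.ne_of_mem_erase hy1
    obtain ⟨D, -, huniq⟩ := Q.existsUnique_block P y (Ne.symm hyP)
    exact hne12 ((huniq D₁ ⟨h1.1, h1.2, Finset.mem_of_mem_erase hy1⟩).trans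
      (huniq D₂ ⟨h2.1, h2.2, Finset.mem_of_mem_erase hy2⟩).symm)
  have hcover : Finset.univ.erase P =
      (Q.blocks.filter (fun D => P ∈ D)).biUnion (fun D => D.erase P) := by
    ext y
    constructor
    · intro hy
      have hyP : y ≠ P := Finset.ne_of_mem_erase hy
      obtain ⟨D, ⟨hD, hPD, hyD⟩, -⟩ := Q.existsUnique_block P y (Ne.symm hyP)
      exact Finset.mem_biUnion.mpr ⟨D, Finset.mem_filter.mpr ⟨hD, hPD⟩,
        Finset.mem_erase.mpr ⟨hyP, hyD⟩⟩
    · intro hy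
      obtain ⟨D, -, hyD⟩ := Finset.mem_biUnion.mp hy
      exact Finset.mem_erase.mpr ⟨Finset.ne_of_mem_erase hyD, Finset.mem_univ y⟩
  have hcards : ∑ D ∈ Q.blocks.filter (fun D => P ∈ D), ((D.card : ℝ) - 1) = (t:ℝ) - 1 := by
    have step : ∀ D ∈ Q.blocks.filter (fun D => P ∈ D),
        ((D.card : ℝ) - 1) = (((D.erase P).card : ℕ) : ℝ) := by
      intro D hD
      rw [Finset.mem_filter] at hD
      rw [Finset.card_erase_of_mem hD.2]
      have h2c : 2 ≤ D.card := Q.two_le_card D hD.1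
      have h1c : (1:ℕ) ≤ D.card := by omega
      rw [Nat.cast_sub h1c, Nat.cast_one]
    calc ∑ D ∈ Q.blocks.filter (fun D => P ∈ D), ((D.card : ℝ) - 1)
        = ∑ D ∈ Q.blocks.filter (fun D => P ∈ D), (((D.erase P).card : ℕ) : ℝ) :=
          Finset.sum_congr rfl step
      _ = ((∑ D ∈ Q.blocks.filter (fun D => P ∈ D), (D.erase P).card : ℕ) : ℝ) :=
          (Nat.cast_sum _ _).symm
      _ = ((((Q.blocks.filter (fun D => P ∈ D)).biUnion (fun D => D.erase P)).card : ℕ) : ℝ) := by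
          rw [Finset.card_biUnion hdisj]
      _ = (((Finset.univ.erase P).card : ℕ) : ℝ) := by rw [hcover]
      _ = (t:ℝ) - 1 := by
          rw [Finset.card_erase_of_mem (Finset.mem_univ P), Finset.card_univ, Fintype.card_fin]
          have h1t : (1:ℕ) ≤ t := by omega
          rw [Nat.cast_sub h1t, Nat.cast_one]
  have hne : (Q.blocks.filter (fun D => P ∈ D)).Nonempty := by
    obtain ⟨y, hy⟩ := Fintype.exists_ne_of_one_lt_card (by rw [Fintype.card_fin]; omega) P
    obtain ⟨D, ⟨hD, hPD, -⟩, -⟩ := Q.existsUnique_block P y (Ne.symm hy)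
    exact ⟨D, Finset.mem_filter.mpr ⟨hD, hPD⟩⟩
  -- per-block inequality
  have hblock : ∀ D ∈ Q.blocks.filter (fun D => P ∈ D),
      ERdelta s t / (D.card : ℝ) + (ERalpha s t - 1) <
        ((D.card : ℝ) - 1) * ((2 * ERdelta s t / (t:ℝ) - 1) / ((t:ℝ) - 1)) := by
    intro D hD
    rw [Finset.mem_filter] at hD
    have h2c : 2 ≤ D.card := Q.two_le_card D hD.1
    have hd2 : (2:ℝ) ≤ (D.card : ℝ) := by exact_mod_cast h2c
    have hdlt : (D.card : ℝ) < (t:ℝ) / 2 := hP D hD.1 hD.2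
    have hdn : 2 * D.card < t := by
      have h' : (2:ℝ) * (D.card : ℝ) < (t:ℝ) := by linarith
      exact_mod_cast h'
    have hde : (D.card : ℝ) ≤ ((t:ℝ) - 1) / 2 := by
      have h' : 2 * D.card + 1 ≤ t := by omega
      have h'' : ((2 * D.card + 1 : ℕ) : ℝ) ≤ ((t : ℕ) : ℝ) := Nat.cast_le.mpr h'
      push_cast at h''
      linarith
    have hF : 0 < Fq s t (D.card : ℝ) := Fq_pos_mid s t (D.card : ℝ) (((t:ℝ) - 1) / 2)
      hd2 hde hA hB hC
    have hd0 : (0:ℝ) < (D.card : ℝ) := by linarith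
    have hkey : (((D.card : ℝ) - 1) * ((2 * ERdelta s t / (t:ℝ) - 1) / ((t:ℝ) - 1)) -
        (ERdelta s t / (D.card : ℝ) + (ERalpha s t - 1))) *
          ((D.card : ℝ) * ((t:ℝ) * ((t:ℝ) - 1))) = Fq s t (D.card : ℝ) := by
      simp only [Fq]
      field_simp
      ring
    have hppos : (0:ℝ) < (D.card : ℝ) * ((t:ℝ) * ((t:ℝ) - 1)) := by positivity
    have := pos_of_mul_eq hppos hF hkey
    linarith
  have hsum := Finset.sum_lt_sum_of_nonempty hne hblock
  have hrhs : ∑ D ∈ Q.blocks.filter (fun D => P ∈ D),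
      (((D.card : ℝ) - 1) * ((2 * ERdelta s t / (t:ℝ) - 1) / ((t:ℝ) - 1))) =
        2 * ERdelta s t / (t:ℝ) - 1 := by
    rw [← Finset.sum_mul, hcards]
    field_simp
  rw [localValue]
  rw [hrhs] at hsum
  linarith
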